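/- Over all 24 permutations σ ∈ S_4, the number of σ with lag-1 transcript τ₁(σ) = π^[k] equals 2, 2, 2, 7, 7, 4 for k = 1, 2, 3, 4, 5, 6 respectively. Equivalently, under the uniform distribution on S_4, P(τ₁ = π^[k]) equals 2/24, 2/24, 2/24, 7/24, 7/24, 4/24 for k = 1,…,6. -/

import Mathlib

open Equiv

/-- The transcript of an ordered pair of permutations: `τ(π₁,π₂) = π₁⁻¹ ∘ π₂`. -/
def transcript {m : ℕ} (π₁ π₂ : Perm (Fin m)) : Perm (Fin m) := π₁⁻¹ * π₂

/-- The ordinal pattern of a triple `y` with pairwise distinct entries: the unique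
permutation `π ∈ S_3` with `y (π 0) < y (π 1) < y (π 2)`. -/
noncomputable def opattern {α : Type*} [LinearOrder α] (y : Fin 3 → α) : Perm (Fin 3) :=
  if h : ∃ π : Perm (Fin 3), y (π 0) < y (π 1) ∧ y (π 1) < y (π 2) then h.choose else 1

/-- For `σ ∈ S_N`, viewed as the tuple `(σ 0, …, σ (N-1))`, the ordinal pattern of
the window `(σ t, σ (t+1), σ (t+2))` (0-based `t`). -/
noncomputable def patN {N : ℕ} (σ : Perm (Fin N)) (t : ℕ) (h : t + 2 < N) : Perm (Fin 3) :=
  opattern fun i : Fin 3 => σ ⟨t + i, by have := i.isLt; omega⟩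

/-- The lag-1 transcript of the ordinal patterns at (0-based) windows `t` and `t+1`;
this is `τ_{t+1}` in the 1-based numbering of the paper. -/
noncomputable def tauN {N : ℕ} (σ : Perm (Fin N)) (t : ℕ) (h : t + 3 < N) : Perm (Fin 3) :=
  transcript (patN σ t (by omega)) (patN σ (t + 1) (by omega))

/-- `π^[1] = (1,2,3)`, the identity. -/
def p1 : Perm (Fin 3) := 1
/-- `π^[2] = (1,3,2)`. -/
def p2 : Perm (Fin 3) := Equiv.swap 1 2
/-- `π^[3] = (2,1,3)`. -/
def p3 : Perm (Fin 3) := Equiv.swap 0 1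
/-- `π^[4] = (2,3,1)`, i.e. `0 ↦ 1 ↦ 2 ↦ 0`. -/
def p4 : Perm (Fin 3) := Equiv.swap 0 1 * Equiv.swap 1 2
/-- `π^[5] = (3,1,2)`, i.e. `0 ↦ 2 ↦ 1 ↦ 0`. -/
def p5 : Perm (Fin 3) := Equiv.swap 1 2 * Equiv.swap 0 1
/-- `π^[6] = (3,2,1)`. -/
def p6 : Perm (Fin 3) := Equiv.swap 0 2

/-- The labelling `k ↦ π^[k+1]` of the six elements of `S_3`. -/
def lab : Fin 6 → Perm (Fin 3) := ![p1, p2, p3, p4, p5, p6]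

/-- A computable ordinal pattern of three values. -/
def patC {α : Type*} [LinearOrder α] (a b c : α) : Perm (Fin 3) :=
  if a < b then (if b < c then p1 else if a < c then p2 else p5)
  else (if a < c then p3 else if b < c then p4 else p6)

lemma opattern_eq {α : Type*} [LinearOrder α] (y : Fin 3 → α) (π : Perm (Fin 3))
    (h1 : y (π 0) < y (π 1)) (h2 : y (π 1) < y (π 2)) : opattern y = π := by
  have hex : ∃ π : Perm (Fin 3), y (π 0) < y (π 1) ∧ y (π 1) < y (π 2) := ⟨π, h1, h2⟩
  rw [opattern, dif_pos hex]
  obtain ⟨g1, g2⟩ := hex.choose_spec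
  set π' := hex.choose with hπ'
  have hmono : ∀ ρ : Perm (Fin 3), y (ρ 0) < y (ρ 1) → y (ρ 1) < y (ρ 2) →
      StrictMono (y ∘ ρ) := by
    intro ρ a1 a2
    rw [Fin.strictMono_iff_lt_succ]
    intro i
    fin_cases i
    · exact a1
    · exact a2
  have m1 : StrictMono (y ∘ π') := hmono π' g1 g2
  have m2 : StrictMono (y ∘ π) := hmono π h1 h2
  have hr : Set.range (y ∘ π') = Set.range (y ∘ π) := by
    rw [Set.range_comp, Set.range_comp, Set.range_eq_univ.mpr π'.surjective,
      Set.range_eq_univ.mpr π.surjective]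
  have heq : (y ∘ π') = (y ∘ π) := by
    haveI : WellFoundedLT (Fin 3) := inferInstance
    exact (StrictMono.range_inj m1 m2).mp hr
  have hinj : Function.Injective y := by
    have : Function.Injective (y ∘ π) := m2.injective
    have := this.comp π.symm.injective
    simpa [Function.comp_def] using this
  ext i
  exact congrArg Fin.val (hinj (congrFun heq i))

lemma opattern_patC {α : Type*} [LinearOrder α] (y : Fin 3 → α)
    (hinj : Function.Injective y) : opattern y = patC (y 0) (y 1) (y 2) := by
  have d01 : y 0 ≠ y 1 := fun h => by simpa using hinj h
  have d02 : y 0 ≠ y 2 := fun h => by simpa using hinj h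
  have d12 : y 1 ≠ y 2 := fun h => by simpa using hinj h
  have e1 : (p1 : Perm (Fin 3)) 0 = 0 ∧ (p1 : Perm (Fin 3)) 1 = 1 ∧ (p1 : Perm (Fin 3)) 2 = 2 := by decide
  have e2 : (p2 : Perm (Fin 3)) 0 = 0 ∧ (p2 : Perm (Fin 3)) 1 = 2 ∧ (p2 : Perm (Fin 3)) 2 = 1 := by decide
  have e3 : (p3 : Perm (Fin 3)) 0 = 1 ∧ (p3 : Perm (Fin 3)) 1 = 0 ∧ (p3 : Perm (Fin 3)) 2 = 2 := by decide
  have e4 : (p4 : Perm (Fin 3)) 0 = 1 ∧ (p4 : Perm (Fin 3)) 1 = 2 ∧ (p4 : Perm (Fin 3)) 2 = 0 := by decide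
  have e5 : (p5 : Perm (Fin 3)) 0 = 2 ∧ (p5 : Perm (Fin 3)) 1 = 0 ∧ (p5 : Perm (Fin 3)) 2 = 1 := by decide
  have e6 : (p6 : Perm (Fin 3)) 0 = 2 ∧ (p6 : Perm (Fin 3)) 1 = 1 ∧ (p6 : Perm (Fin 3)) 2 = 0 := by decide
  unfold patC
  by_cases hab : y 0 < y 1
  · by_cases hbc : y 1 < y 2
    · rw [if_pos hab, if_pos hbc]
      exact opattern_eq y p1 (by rw [e1.1, e1.2.1]; exact hab) (by rw [e1.2.1, e1.2.2]; exact hbc)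
    · have hcb : y 2 < y 1 := lt_of_le_of_ne (not_lt.mp hbc) (Ne.symm d12)
      by_cases hac : y 0 < y 2
      · rw [if_pos hab, if_neg hbc, if_pos hac]
        exact opattern_eq y p2 (by rw [e2.1, e2.2.1]; exact hac) (by rw [e2.2.1, e2.2.2]; exact hcb)
      · have hca : y 2 < y 0 := lt_of_le_of_ne (not_lt.mp hac) (Ne.symm d02)
        rw [if_pos hab, if_neg hbc, if_neg hac]
        exact opattern_eq y p5 (by rw [e5.1, e5.2.1]; exact hca) (by rw [e5.2.1, e5.2.2]; exact hab)
  · have hba : y 1 < y 0 := lt_of_le_of_ne (not_lt.mp hab) (Ne.symm d01)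
    by_cases hac : y 0 < y 2
    · rw [if_neg hab, if_pos hac]
      exact opattern_eq y p3 (by rw [e3.1, e3.2.1]; exact hba) (by rw [e3.2.1, e3.2.2]; exact hac)
    · have hca : y 2 < y 0 := lt_of_le_of_ne (not_lt.mp hac) (Ne.symm d02)
      by_cases hbc : y 1 < y 2
      · rw [if_neg hab, if_neg hac, if_pos hbc]
        exact opattern_eq y p4 (by rw [e4.1, e4.2.1]; exact hbc) (by rw [e4.2.1, e4.2.2]; exact hca)
      · have hcb : y 2 < y 1 := lt_of_le_of_ne (not_lt.mp hbc) (Ne.symm d12)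
        rw [if_neg hab, if_neg hac, if_neg hbc]
        exact opattern_eq y p6 (by rw [e6.1, e6.2.1]; exact hcb) (by rw [e6.2.1, e6.2.2]; exact hba)

lemma tauN_eq (σ : Perm (Fin 4)) :
    tauN σ 0 (by norm_num) = transcript (patC (σ 0) (σ 1) (σ 2)) (patC (σ 1) (σ 2) (σ 3)) := by
  have h1 : patN σ 0 (by omega) = patC (σ 0) (σ 1) (σ 2) := by
    rw [patN, opattern_patC _ (by
      intro i j h
      exact Fin.ext (by have := σ.injective h; have := Fin.mk.injEq .. ▸ this; omega))]
    congr 1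
  have h2 : patN σ 1 (by omega) = patC (σ 1) (σ 2) (σ 3) := by
    rw [patN, opattern_patC _ (by
      intro i j h
      exact Fin.ext (by have := σ.injective h; have := Fin.mk.injEq .. ▸ this; omega))]
    congr 1
  rw [tauN, h1, h2]

theorem transcript_marginal_iid : ∀ k : Fin 6,
    Nat.card {σ : Perm (Fin 4) // tauN σ 0 (by omega) = lab k} = ![2, 2, 2, 7, 7, 4] k ∧
    (Nat.card {σ : Perm (Fin 4) // tauN σ 0 (by omega) = lab k} : ℚ) / 24 =
      ![2/24, 2/24, 2/24, 7/24, 7/24, 4/24] k := by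
  have key : ∀ k : Fin 6,
      Nat.card {σ : Perm (Fin 4) // tauN σ 0 (by omega) = lab k} = ![2, 2, 2, 7, 7, 4] k := by
    intro k
    have : Nat.card {σ : Perm (Fin 4) // tauN σ 0 (by omega) = lab k} =
        Nat.card {σ : Perm (Fin 4) //
          transcript (patC (σ 0) (σ 1) (σ 2)) (patC (σ 1) (σ 2) (σ 3)) = lab k} := by
      apply Nat.card_congr
      exact Equiv.subtypeEquivRight (fun σ => by rw [tauN_eq σ])
    rw [this, Nat.card_eq_fintype_card]
    fin_cases k <;> decide
  intro k
  refine ⟨key k, ?_⟩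
  rw [key k]
  fin_cases k <;> norm_num
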